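/- Let C and D be closed model categories and (S, U): C → D a Quillen equivalence. If Y is a fibrant object of D, then the induced Quillen adjunction (S̃, Ũ): (C↓U(Y)) → (D↓Y) between the slice categories is a Quillen equivalence. -/

import Mathlib

open CategoryTheory CategoryTheory.Limits

universe v u v' u'

/-- `f` is a retract of `g` in the arrow category. -/
def IsRetractOfArrow {C : Type u} [Category.{v} C] {A B A' B' : C}
    (f : A ⟶ B) (g : A' ⟶ B') : Prop :=
  ∃ (i : Arrow.mk f ⟶ Arrow.mk g) (r : Arrow.mk g ⟶ Arrow.mk f), i ≫ r = 𝟙 (Arrow.mk f)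

/-- A (closed) model structure on a category `C`, in the sense of Quillen: three classes of
morphisms (cofibrations, fibrations, weak equivalences) satisfying the two-out-of-three
axiom, closure under retracts, the lifting axioms and the factorization axioms. -/
structure ModelStruct (C : Type u) [Category.{v} C] : Type (max u v) where
  cof : MorphismProperty C
  fib : MorphismProperty C
  weq : MorphismProperty C
  weq_comp : ∀ {X Y Z : C} (f : X ⟶ Y) (g : Y ⟶ Z), weq f → weq g → weq (f ≫ g)
  weq_cancel_left : ∀ {X Y Z : C} (f : X ⟶ Y) (g : Y ⟶ Z), weq f → weq (f ≫ g) → weq g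
  weq_cancel_right : ∀ {X Y Z : C} (f : X ⟶ Y) (g : Y ⟶ Z), weq g → weq (f ≫ g) → weq f
  cof_retract : ∀ {A B A' B' : C} {f : A ⟶ B} {g : A' ⟶ B'},
    IsRetractOfArrow f g → cof g → cof f
  fib_retract : ∀ {A B A' B' : C} {f : A ⟶ B} {g : A' ⟶ B'},
    IsRetractOfArrow f g → fib g → fib f
  weq_retract : ∀ {A B A' B' : C} {f : A ⟶ B} {g : A' ⟶ B'},
    IsRetractOfArrow f g → weq g → weq f
  lifting_cof_trivFib : ∀ {A B X Y : C} (i : A ⟶ B) (p : X ⟶ Y),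
    cof i → fib p → weq p → HasLiftingProperty i p
  lifting_trivCof_fib : ∀ {A B X Y : C} (i : A ⟶ B) (p : X ⟶ Y),
    cof i → weq i → fib p → HasLiftingProperty i p
  factor_cof_trivFib : ∀ {X Y : C} (f : X ⟶ Y),
    ∃ (Z : C) (i : X ⟶ Z) (p : Z ⟶ Y), cof i ∧ fib p ∧ weq p ∧ i ≫ p = f
  factor_trivCof_fib : ∀ {X Y : C} (f : X ⟶ Y),
    ∃ (Z : C) (i : X ⟶ Z) (p : Z ⟶ Y), cof i ∧ weq i ∧ fib p ∧ i ≫ p = f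

variable {C : Type u} [Category.{v} C]

/-- An object is cofibrant if the unique map from the initial object to it is a cofibration. -/
def ModelStruct.Cofibrant [HasInitial C] (M : ModelStruct C) (A : C) : Prop :=
  M.cof (initial.to A)

/-- An object is fibrant if the unique map from it to the terminal object is a fibration. -/
def ModelStruct.Fibrant [HasTerminal C] (M : ModelStruct C) (A : C) : Prop :=
  M.fib (terminal.from A)

/-- The induced model structure on the coslice category `(X ↓ C)`: a morphism is a
cofibration, fibration or weak equivalence iff its underlying morphism in `C` is one. -/
def ModelStruct.under (M : ModelStruct C) (X : C) : ModelStruct (Under X) where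
  cof _ _ f := M.cof f.right
  fib _ _ f := M.fib f.right
  weq _ _ f := M.weq f.right
  weq_comp f g hf hg := by simpa using M.weq_comp f.right g.right hf hg
  weq_cancel_left f g hf hfg := M.weq_cancel_left f.right g.right hf (by simpa using hfg)
  weq_cancel_right f g hg hfg := M.weq_cancel_right f.right g.right hg (by simpa using hfg)
  cof_retract := fun ⟨i, r, hir⟩ hg => M.cof_retract
    ⟨(Under.forget X).mapArrow.map i, (Under.forget X).mapArrow.map r,
      ((Under.forget X).mapArrow.map_comp i r).symm.trans
        (by rw [hir, CategoryTheory.Functor.map_id]; rfl)⟩ hg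
  fib_retract := fun ⟨i, r, hir⟩ hg => M.fib_retract
    ⟨(Under.forget X).mapArrow.map i, (Under.forget X).mapArrow.map r,
      ((Under.forget X).mapArrow.map_comp i r).symm.trans
        (by rw [hir, CategoryTheory.Functor.map_id]; rfl)⟩ hg
  weq_retract := fun ⟨i, r, hir⟩ hg => M.weq_retract
    ⟨(Under.forget X).mapArrow.map i, (Under.forget X).mapArrow.map r,
      ((Under.forget X).mapArrow.map_comp i r).symm.trans
        (by rw [hir, CategoryTheory.Functor.map_id]; rfl)⟩ hg
  lifting_cof_trivFib i p hi hp hp' := by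
    constructor
    intro f g sq
    haveI := M.lifting_cof_trivFib i.right p.right hi hp hp'
    have sq' : CommSq f.right i.right p.right g.right :=
      ⟨by rw [← Under.comp_right, sq.w, Under.comp_right]⟩
    exact ⟨⟨⟨Under.homMk sq'.lift (by
        rw [← Under.w i, Category.assoc, sq'.fac_left, Under.w f]),
      by ext; exact sq'.fac_left, by ext; exact sq'.fac_right⟩⟩⟩
  lifting_trivCof_fib i p hi hi' hp := by
    constructor
    intro f g sq
    haveI := M.lifting_trivCof_fib i.right p.right hi hi' hp
    have sq' : CommSq f.right i.right p.right g.right :=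
      ⟨by rw [← Under.comp_right, sq.w, Under.comp_right]⟩
    exact ⟨⟨⟨Under.homMk sq'.lift (by
        rw [← Under.w i, Category.assoc, sq'.fac_left, Under.w f]),
      by ext; exact sq'.fac_left, by ext; exact sq'.fac_right⟩⟩⟩
  factor_cof_trivFib {A B} f := by
    obtain ⟨Z, i, p, hi, hp, hp', hfac⟩ := M.factor_cof_trivFib f.right
    exact ⟨Under.mk (A.hom ≫ i), Under.homMk i rfl,
      Under.homMk p (by show (A.hom ≫ i) ≫ p = B.hom; rw [Category.assoc, hfac, Under.w f]),
      hi, hp, hp', by ext; exact hfac⟩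
  factor_trivCof_fib {A B} f := by
    obtain ⟨Z, i, p, hi, hi', hp, hfac⟩ := M.factor_trivCof_fib f.right
    exact ⟨Under.mk (A.hom ≫ i), Under.homMk i rfl,
      Under.homMk p (by show (A.hom ≫ i) ≫ p = B.hom; rw [Category.assoc, hfac, Under.w f]),
      hi, hi', hp, by ext; exact hfac⟩

/-- The induced model structure on the slice category `(C ↓ X)`: a morphism is a
cofibration, fibration or weak equivalence iff its underlying morphism in `C` is one. -/
def ModelStruct.over (M : ModelStruct C) (X : C) : ModelStruct (Over X) where
  cof _ _ f := M.cof f.left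
  fib _ _ f := M.fib f.left
  weq _ _ f := M.weq f.left
  weq_comp f g hf hg := by simpa using M.weq_comp f.left g.left hf hg
  weq_cancel_left f g hf hfg := M.weq_cancel_left f.left g.left hf (by simpa using hfg)
  weq_cancel_right f g hg hfg := M.weq_cancel_right f.left g.left hg (by simpa using hfg)
  cof_retract := fun ⟨i, r, hir⟩ hg => M.cof_retract
    ⟨(Over.forget X).mapArrow.map i, (Over.forget X).mapArrow.map r,
      ((Over.forget X).mapArrow.map_comp i r).symm.trans
        (by rw [hir, CategoryTheory.Functor.map_id]; rfl)⟩ hg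
  fib_retract := fun ⟨i, r, hir⟩ hg => M.fib_retract
    ⟨(Over.forget X).mapArrow.map i, (Over.forget X).mapArrow.map r,
      ((Over.forget X).mapArrow.map_comp i r).symm.trans
        (by rw [hir, CategoryTheory.Functor.map_id]; rfl)⟩ hg
  weq_retract := fun ⟨i, r, hir⟩ hg => M.weq_retract
    ⟨(Over.forget X).mapArrow.map i, (Over.forget X).mapArrow.map r,
      ((Over.forget X).mapArrow.map_comp i r).symm.trans
        (by rw [hir, CategoryTheory.Functor.map_id]; rfl)⟩ hg
  lifting_cof_trivFib i p hi hp hp' := by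
    constructor
    intro f g sq
    haveI := M.lifting_cof_trivFib i.left p.left hi hp hp'
    have sq' : CommSq f.left i.left p.left g.left :=
      ⟨by rw [← Over.comp_left, sq.w, Over.comp_left]⟩
    exact ⟨⟨⟨Over.homMk sq'.lift (by
        rw [← Over.w p, ← Category.assoc, sq'.fac_right, Over.w g]),
      by ext; exact sq'.fac_left, by ext; exact sq'.fac_right⟩⟩⟩
  lifting_trivCof_fib i p hi hi' hp := by
    constructor
    intro f g sq
    haveI := M.lifting_trivCof_fib i.left p.left hi hi' hp
    have sq' : CommSq f.left i.left p.left g.left :=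
      ⟨by rw [← Over.comp_left, sq.w, Over.comp_left]⟩
    exact ⟨⟨⟨Over.homMk sq'.lift (by
        rw [← Over.w p, ← Category.assoc, sq'.fac_right, Over.w g]),
      by ext; exact sq'.fac_left, by ext; exact sq'.fac_right⟩⟩⟩
  factor_cof_trivFib {A B} f := by
    obtain ⟨Z, i, p, hi, hp, hp', hfac⟩ := M.factor_cof_trivFib f.left
    exact ⟨Over.mk (p ≫ B.hom), Over.homMk i (by show i ≫ p ≫ B.hom = A.hom; rw [← Category.assoc, hfac, Over.w f]),
      Over.homMk p rfl, hi, hp, hp', by ext; exact hfac⟩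
  factor_trivCof_fib {A B} f := by
    obtain ⟨Z, i, p, hi, hi', hp, hfac⟩ := M.factor_trivCof_fib f.left
    exact ⟨Over.mk (p ≫ B.hom), Over.homMk i (by show i ≫ p ≫ B.hom = A.hom; rw [← Category.assoc, hfac, Over.w f]),
      Over.homMk p rfl, hi, hi', hp, by ext; exact hfac⟩

noncomputable instance (X : C) : HasInitial (Under X) :=
  Under.mkIdInitial.hasInitial

noncomputable instance (X : C) : HasTerminal (Over X) :=
  Over.mkIdTerminal.hasTerminal

/-- The terminal object of `(X ↓ C)` is `X ⟶ *`. -/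
noncomputable def underMkTerminal [HasTerminal C] (X : C) :
    IsTerminal (Under.mk (terminal.from X)) :=
  IsTerminal.ofUniqueHom (fun u => Under.homMk (terminal.from u.right)
      (terminal.hom_ext _ _))
    (fun u m => by ext; exact terminal.hom_ext _ _)

noncomputable instance [HasTerminal C] (X : C) : HasTerminal (Under X) :=
  (underMkTerminal X).hasTerminal

/-- The initial object of `(C ↓ X)` is `∅ ⟶ X`. -/
noncomputable def overMkInitial [HasInitial C] (X : C) :
    IsInitial (Over.mk (initial.to X)) :=
  IsInitial.ofUniqueHom (fun u => Over.homMk (initial.to u.left)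
      (initial.hom_ext _ _))
    (fun u m => by ext; exact initial.hom_ext _ _)

noncomputable instance [HasInitial C] (X : C) : HasInitial (Over X) :=
  (overMkInitial X).hasInitial

/-- A Quillen adjunction between model categories: an adjoint pair whose left adjoint
preserves cofibrations and acyclic cofibrations. -/
structure QuillenAdjunction {C : Type u} [Category.{v} C] {D : Type u'} [Category.{v'} D]
    (M : ModelStruct C) (N : ModelStruct D) (F : C ⥤ D) (G : D ⥤ C) where
  adj : F ⊣ G
  map_cof : ∀ {A B : C} (f : A ⟶ B), M.cof f → N.cof (F.map f)
  map_trivCof_weq : ∀ {A B : C} (f : A ⟶ B), M.cof f → M.weq f → N.weq (F.map f)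

/-- A Quillen adjunction is a Quillen equivalence if for every cofibrant `A` and fibrant `B`,
a map `F A ⟶ B` is a weak equivalence iff its adjunct `A ⟶ G B` is. -/
def IsQuillenEquivalence {C : Type u} [Category.{v} C] {D : Type u'} [Category.{v'} D]
    [HasInitial C] [HasTerminal D]
    (M : ModelStruct C) (N : ModelStruct D) {F : C ⥤ D} {G : D ⥤ C} (adj : F ⊣ G) : Prop :=
  ∀ (A : C) (B : D), M.Cofibrant A → N.Fibrant B →
    ∀ f : F.obj A ⟶ B, N.weq f ↔ M.weq ((adj.homEquiv A B) f)



section Aux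

variable {E : Type u} [Category.{v} E]

lemma ModelStruct.cof_precomp_iso (M : ModelStruct E) {A A' B : E} (e : A ≅ A') (g : A' ⟶ B)
    (hg : M.cof g) : M.cof (e.hom ≫ g) :=
  M.cof_retract ⟨Arrow.homMk' (f := e.hom ≫ g) (g := g) (u := e.hom) (v := 𝟙 B) (by simp),
    Arrow.homMk' (u := e.inv) (v := 𝟙 B) (by simp), by ext <;> simp⟩ hg

lemma ModelStruct.fib_postcomp_iso (M : ModelStruct E) {A B B' : E} (g : A ⟶ B) (e : B ≅ B')
    (hg : M.fib g) : M.fib (g ≫ e.hom) :=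
  M.fib_retract ⟨Arrow.homMk' (f := g ≫ e.hom) (g := g) (u := 𝟙 A) (v := e.inv) (by simp),
    Arrow.homMk' (u := 𝟙 A) (v := e.hom) (by simp), by ext <;> simp⟩ hg

lemma ModelStruct.fib_of_rlp (M : ModelStruct E) {X Z : E} (p : X ⟶ Z)
    (h : ∀ {A B : E} (i : A ⟶ B), M.cof i → M.weq i → HasLiftingProperty i p) : M.fib p := by
  obtain ⟨W, i, q, hi, hi', hq, hfac⟩ := M.factor_trivCof_fib p
  haveI := h i hi hi'
  have sq : CommSq (𝟙 X) i p q := ⟨by simp [hfac]⟩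
  exact M.fib_retract ⟨Arrow.homMk' (f := p) (g := q) (u := i) (v := 𝟙 Z) (by simp [hfac]),
    Arrow.homMk' (u := sq.lift) (v := 𝟙 Z) (by simp),
    by ext <;> simp⟩ hq

lemma ModelStruct.fib_comp (M : ModelStruct E) {X Y Z : E} (p : X ⟶ Y) (q : Y ⟶ Z)
    (hp : M.fib p) (hq : M.fib q) : M.fib (p ≫ q) := by
  apply M.fib_of_rlp
  intro A B i hi hi'
  haveI := M.lifting_trivCof_fib i p hi hi' hp
  haveI := M.lifting_trivCof_fib i q hi hi' hq
  infer_instance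

end Aux

/-- The induced adjunction between slice categories. -/
noncomputable def sliceAdj {C : Type u} [Category.{v} C] {D : Type u'} [Category.{v'} D]
    {S : C ⥤ D} {U : D ⥤ C} (adj : S ⊣ U) (Y : D) :
    (Over.post S ⋙ Over.map (adj.counit.app Y)) ⊣ Over.post U :=
  Adjunction.mkOfHomEquiv
    { homEquiv := fun A B =>
        { toFun := fun g => Over.homMk ((adj.homEquiv A.left B.left) g.left) (by
            have hw : g.left ≫ B.hom = S.map A.hom ≫ adj.counit.app Y := Over.w g
            dsimp
            erw [← Adjunction.homEquiv_naturality_right, hw,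
              Adjunction.homEquiv_naturality_left]
            simp [Adjunction.homEquiv_apply])
          invFun := fun h => Over.homMk ((adj.homEquiv A.left B.left).symm h.left) (by
            have hw : h.left ≫ U.map B.hom = A.hom := Over.w h
            dsimp
            erw [← Adjunction.homEquiv_naturality_right_symm, hw,
              Adjunction.homEquiv_symm_apply]
            rfl)
          left_inv := fun g => by ext; exact (adj.homEquiv A.left B.left).left_inv g.left
          right_inv := fun h => by ext; exact (adj.homEquiv A.left B.left).right_inv h.left }
      homEquiv_naturality_left_symm := fun f g => by
        ext
        exact Adjunction.homEquiv_naturality_left_symm _ _ _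
      homEquiv_naturality_right := fun f g => by
        ext
        exact Adjunction.homEquiv_naturality_right _ _ _ }

/-- **Statement 12.** If `(S, U) : C → D` is a Quillen equivalence and `Y` is a fibrant object
of `D`, then the induced Quillen adjunction `(S̃, Ũ) : (C ↓ U Y) → (D ↓ Y)` between the slice
categories is a Quillen equivalence. -/
theorem slice_induced_quillen_equivalence {C : Type u} [Category.{v} C]
    {D : Type u'} [Category.{v'} D]
    [HasLimits C] [HasColimits C] [HasLimits D] [HasColimits D]
    (M : ModelStruct C) (N : ModelStruct D) {S : C ⥤ D} {U : D ⥤ C}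
    (Q : QuillenAdjunction M N S U) (hQ : IsQuillenEquivalence M N Q.adj)
    (Y : D) (hY : N.Fibrant Y) :
    ∃ QA : QuillenAdjunction (M.over (U.obj Y)) (N.over Y)
        (Over.post S ⋙ Over.map (Q.adj.counit.app Y)) (Over.post U),
      IsQuillenEquivalence (M.over (U.obj Y)) (N.over Y) QA.adj := by
  refine ⟨{ adj := sliceAdj Q.adj Y
            map_cof := fun f hf => Q.map_cof f.left hf
            map_trivCof_weq := fun f hf hf' => Q.map_trivCof_weq f.left hf hf' }, ?_⟩
  intro A B hA hB f
  -- `A.left` is cofibrant in `C`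
  have eI : ⊥_ (Over (U.obj Y)) ≅ Over.mk (initial.to (U.obj Y)) :=
    initialIsInitial.uniqueUpToIso (overMkInitial (U.obj Y))
  have eIl : (Over.mk (initial.to (U.obj Y))).left ≅ (⊥_ (Over (U.obj Y))).left :=
    { hom := eI.inv.left
      inv := eI.hom.left
      hom_inv_id := by rw [← Over.comp_left, eI.inv_hom_id]; rfl
      inv_hom_id := by rw [← Over.comp_left, eI.hom_inv_id]; rfl }
  have hAl : M.Cofibrant A.left := by
    have h1 : initial.to A.left = eIl.hom ≫ (initial.to A).left := initial.hom_ext _ _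
    rw [ModelStruct.Cofibrant, h1]
    exact M.cof_precomp_iso eIl _ hA
  -- `B.left` is fibrant in `D`
  have eT : ⊤_ (Over Y) ≅ Over.mk (𝟙 Y) :=
    terminalIsTerminal.uniqueUpToIso Over.mkIdTerminal
  have hBhom : N.fib B.hom := by
    have h2 : B.hom = (terminal.from B).left ≫ eT.hom.left := by
      have := Over.w (terminal.from B ≫ eT.hom)
      simpa using this.symm
    rw [h2]
    exact N.fib_postcomp_iso _
      ⟨eT.hom.left, eT.inv.left, by rw [← Over.comp_left, eT.hom_inv_id]; rfl,
        by rw [← Over.comp_left, eT.inv_hom_id]; rfl⟩ hB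
  have hBl : N.Fibrant B.left := by
    have h3 : terminal.from B.left = B.hom ≫ terminal.from Y := terminal.hom_ext _ _
    rw [ModelStruct.Fibrant, h3]
    exact N.fib_comp _ _ hBhom hY
  have key := hQ A.left B.left hAl hBl f.left
  have hadj : ((((sliceAdj Q.adj Y).homEquiv A B) f).left : A.left ⟶ U.obj B.left)
      = (Q.adj.homEquiv A.left B.left) f.left := by
    rw [sliceAdj, Adjunction.mkOfHomEquiv_homEquiv]
    rfl
  constructor
  · intro h
    show M.weq _
    rw [hadj]
    exact key.mp h
  · intro h
    rw [show ((M.over (U.obj Y)).weq _) =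
        M.weq ((((sliceAdj Q.adj Y).homEquiv A B) f).left) from rfl, hadj] at h
    exact key.mpr h
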